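/- For all integers n ≥ 2, ∑_{i=0}^{n} C(n,i) · |(1/2)_i| · |(1/2)_{n-i}| = 4 · |(1/2)_n|. -/

import Mathlib

/-- The absolute value of the falling factorial `(1/2)_n`. -/
noncomputable def ff (n : ℕ) : ℝ := |(descPochhammer ℝ n).eval (1/2 : ℝ)|

open Polynomial Finset

lemma smeval_desc (n : ℕ) (r : ℝ) :
    (descPochhammer ℤ n).smeval r = (descPochhammer ℝ n).eval r := by
  rw [← descPochhammer_map (Int.castRingHom ℝ) n, eval_map, ← Polynomial.eval₂_smulOneHom_eq_smeval]
  congr 1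
  exact Subsingleton.elim _ _

lemma hq : ∀ k : ℕ, (descPochhammer ℝ (k+1)).eval (1/2 : ℝ) = (-1)^k * ff (k+1) := by
  intro k
  induction k with
  | zero => rw [descPochhammer_one, ff]; simp
  | succ k ih =>
    have h1 : (descPochhammer ℝ (k+2)).eval (1/2 : ℝ)
        = (descPochhammer ℝ (k+1)).eval (1/2 : ℝ) * ((1/2 : ℝ) - ((k:ℝ)+1)) := by
      rw [descPochhammer_succ_eval]
      push_cast; ring
    have h2 : |(1/2:ℝ) - ((k:ℝ)+1)| = (k:ℝ)+1 - 1/2 := by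
      rw [abs_of_nonpos (by linarith [Nat.cast_nonneg (α := ℝ) k])]; ring
    have hff : ff (k+2) = ff (k+1) * ((k:ℝ)+1 - 1/2) := by
      unfold ff
      rw [h1, abs_mul, h2]
    rw [h1, ih, hff]
    ring

lemma heval1 (n : ℕ) (hn : 2 ≤ n) : (descPochhammer ℝ n).eval (1 : ℝ) = 0 := by
  obtain ⟨m, rfl⟩ : ∃ m, n = m + 2 := ⟨n - 2, by omega⟩
  rw [show m + 2 = (m + 1) + 1 from rfl, descPochhammer_succ_left]
  simp [descPochhammer_ne_zero_eval_zero (R := ℝ) (Nat.succ_ne_zero m)]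

theorem stmt2 (n : ℕ) (hn : 2 ≤ n) :
    ∑ i ∈ Finset.range (n + 1), (n.choose i : ℝ) * ff i * ff (n - i) = 4 * ff n := by
  obtain ⟨m, rfl⟩ : ∃ m, n = m + 2 := ⟨n - 2, by omega⟩
  have hS := Ring.descPochhammer_smeval_add (R := ℝ) (r := (1/2:ℝ)) (s := (1/2:ℝ)) (m+2)
    (Commute.all _ _)
  rw [show (1/2:ℝ)+1/2 = 1 by norm_num, smeval_desc, heval1 _ (by omega)] at hS
  simp only [smeval_desc] at hS
  rw [Finset.Nat.sum_antidiagonal_eq_sum_range_succ_mk] at hS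
  rw [Finset.sum_range_succ, Finset.sum_range_succ'] at hS ⊢
  have hq0 : (descPochhammer ℝ 0).eval (1/2:ℝ) = 1 := by simp
  have hf0 : ff 0 = 1 := by simp [ff]
  have hqm : (descPochhammer ℝ (m+2)).eval (1/2:ℝ) = -((-1:ℝ)^m * ff (m+2)) := by
    rw [hq (m+1), pow_succ]; ring
  have hint : ∑ i ∈ Finset.range (m+1), ((m+2).choose (i+1) : ℝ) * ff (i+1) * ff (m+2-(i+1))
      = (-1:ℝ)^m * ∑ i ∈ Finset.range (m+1),
        (((m+2).choose (i+1) : ℝ) * ((descPochhammer ℝ (i+1)).eval (1/2:ℝ)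
          * (descPochhammer ℝ (m+2-(i+1))).eval (1/2:ℝ))) := by
    rw [Finset.mul_sum]
    refine Finset.sum_congr rfl fun i hi => ?_
    have hi' : i < m+1 := Finset.mem_range.mp hi
    have e : m+2-(i+1) = (m-i)+1 := by omega
    rw [e, hq i, hq (m-i)]
    have hsgn : (-1:ℝ)^m = (-1:ℝ)^i * (-1:ℝ)^(m-i) := by rw [← pow_add]; congr 1; omega
    rw [hsgn]; ring_nf; simp [pow_mul', neg_one_sq, one_pow]
  rw [hint]
  have h1 : (-1:ℝ)^m * (-1:ℝ)^m = 1 := by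
    rw [← pow_add]; exact Even.neg_one_pow ⟨m, rfl⟩
  simp only [Nat.choose_zero_right, Nat.choose_self, Nat.sub_self, Nat.sub_zero, Nat.cast_one,
    hq0, hf0, hqm] at hS ⊢
  linear_combination (-((-1:ℝ)^m)) * hS + 2 * ff (m+2) * h1
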